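/- Fix an integer q ≥ 2, let b_m denote the number of 1-unbordered words of length m over ℤ/qℤ, and let β = ∑_{m≥0} b_m X^m ∈ ℤ[[X]]. Define h(0) := 1 and, for n ≥ 1, h(n) := (−q)^{s(n)} · (1 − (−2)^{k(n)}), where s(n) is the sum of the binary digits of n and k(n) is the 2-adic valuation of n. Then for every K ≥ 0 and every n with 0 ≤ n < 2^{K+1}, the coefficient of X^n in the power series β(X) · ∏_{j=0}^{K} (1 − q·X^{2^j}) equals h(n). -/

import Mathlib

/-- For a word `W` over `ℤ/qℤ`, `addOneFirst W` is the word `W'` obtained by adding `1`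
to the first letter of `W` (and the empty word for the empty word). -/
def addOneFirst {q : ℕ} : List (ZMod q) → List (ZMod q)
  | [] => []
  | x :: xs => (x + 1) :: xs

/-- A word `W` over `ℤ/qℤ` is 1-unbordered if no nonempty proper suffix of `W` is equal
to a prefix of `W` or to a prefix of `W'` (where `W'` is `W` with `1` added to its first
letter). -/
def OneUnbordered {q : ℕ} (W : List (ZMod q)) : Prop :=
  ∀ S : List (ZMod q), S ≠ [] → S.length < W.length → S <:+ W →
    ¬ S <+: W ∧ ¬ S <+: addOneFirst W

/-- The number of 1-unbordered words of length `m` over `ℤ/qℤ`. -/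
noncomputable def countOneUnbordered (q m : ℕ) : ℕ :=
  Nat.card {w : List (ZMod q) // w.length = m ∧ OneUnbordered w}

set_option linter.dupNamespace false

namespace UBaux

variable {q : ℕ}

noncomputable def g (w : List (ZMod q)) (i : ℕ) : ZMod q := w.getD i 0

lemma g_eq (w : List (ZMod q)) {i : ℕ} (h : i < w.length) : g w i = w[i] :=
  List.getD_eq_getElem w 0 h

lemma list_eq_iff_g {u v : List (ZMod q)} (h : u.length = v.length) :
    u = v ↔ ∀ i, i < u.length → g u i = g v i := by
  constructor
  · rintro rfl i hi; rfl
  · intro hg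
    refine List.ext_getElem h fun i h1 h2 => ?_
    rw [← g_eq u h1, ← g_eq v h2]; exact hg i h1

@[simp] lemma length_addOneFirst (w : List (ZMod q)) : (addOneFirst w).length = w.length := by
  cases w <;> simp [addOneFirst]

lemma g_addOneFirst_zero {w : List (ZMod q)} (h : w ≠ []) :
    g (addOneFirst w) 0 = g w 0 + 1 := by
  cases w with
  | nil => simp at h
  | cons x xs => simp [addOneFirst, g]

lemma g_addOneFirst_pos (w : List (ZMod q)) {i : ℕ} (h : 1 ≤ i) :
    g (addOneFirst w) i = g w i := by
  cases w with
  | nil => simp [addOneFirst]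
  | cons x xs =>
    cases i with
    | zero => omega
    | succ n => simp [addOneFirst, g]

lemma g_drop (w : List (ZMod q)) {t i : ℕ} (h : t + i < w.length) :
    g (w.drop t) i = g w (t + i) := by
  rw [g_eq _ (show i < (w.drop t).length by simp; omega), g_eq _ h, List.getElem_drop]

lemma g_take (w : List (ZMod q)) {k i : ℕ} (h : i < k) (h2 : i < w.length) :
    g (w.take k) i = g w i := by
  rw [g_eq _ (show i < (w.take k).length by simp; omega), g_eq _ h2, List.getElem_take]

def QP (w : List (ZMod q)) (t : ℕ) : Prop :=
  (g w t = g w 0 ∨ g w t = g w 0 + 1) ∧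
    ∀ i, 1 ≤ i → t + i < w.length → g w (t + i) = g w i

lemma drop_eq_take_iff (w : List (ZMod q)) (t : ℕ) (h2 : t < w.length) :
    w.drop t = w.take (w.length - t) ↔
      (g w t = g w 0 ∧ ∀ i, 1 ≤ i → t + i < w.length → g w (t + i) = g w i) := by
  have hlen : (w.drop t).length = w.length - t := by simp
  rw [list_eq_iff_g (by simp)]
  constructor
  · intro hg
    constructor
    · have := hg 0 (by omega)
      rwa [g_drop w (by omega), g_take w (by omega) (by omega)] at this
    · intro i hi hlt
      have := hg i (by omega)
      rwa [g_drop w (by omega), g_take w (by omega) (by omega)] at this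
  · rintro ⟨h0, hr⟩ i hi'
    have hi : i < w.length - t := by omega
    rw [g_drop w (by omega), g_take w (by omega) (by omega)]
    rcases Nat.eq_zero_or_pos i with rfl | hip
    · simpa using h0
    · exact hr i hip (by omega)

lemma drop_eq_take'_iff (w : List (ZMod q)) (t : ℕ) (h1 : 1 ≤ t) (h2 : t < w.length) :
    w.drop t = (addOneFirst w).take (w.length - t) ↔
      (g w t = g w 0 + 1 ∧ ∀ i, 1 ≤ i → t + i < w.length → g w (t + i) = g w i) := by
  have hw : w ≠ [] := by rintro rfl; simp at h2
  rw [list_eq_iff_g (by simp)]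
  have key : ∀ i, i < w.length - t →
      (g ((addOneFirst w).take (w.length - t)) i =
        if i = 0 then g w 0 + 1 else g w i) := by
    intro i hi
    rw [g_take _ (by omega) (by simp; omega)]
    rcases Nat.eq_zero_or_pos i with rfl | hip
    · simp [g_addOneFirst_zero hw]
    · rw [g_addOneFirst_pos w hip, if_neg (by omega)]
  constructor
  · intro hg
    constructor
    · have := hg 0 (by simp only [List.length_drop]; omega)
      rwa [g_drop w (by omega), key 0 (by omega), if_pos rfl] at this
    · intro i hi hlt
      have := hg i (by simp only [List.length_drop]; omega)
      rwa [g_drop w (by omega), key i (by omega), if_neg (by omega)] at this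
  · rintro ⟨h0, hr⟩ i hi'
    have hi : i < w.length - t := by simp only [List.length_drop] at hi'; omega
    rw [g_drop w (by omega), key i hi]
    rcases Nat.eq_zero_or_pos i with rfl | hip
    · simpa using h0
    · rw [if_neg (by omega)]; exact hr i hip (by omega)

lemma qp_iff (w : List (ZMod q)) (t : ℕ) (h1 : 1 ≤ t) (h2 : t < w.length) :
    QP w t ↔ (w.drop t = w.take (w.length - t) ∨
      w.drop t = (addOneFirst w).take (w.length - t)) := by
  rw [drop_eq_take_iff w t h2, drop_eq_take'_iff w t h1 h2, QP]
  tauto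

/-- main characterization -/
lemma unb_iff_qp (w : List (ZMod q)) :
    OneUnbordered w ↔ ∀ t, 1 ≤ t → t < w.length → ¬ QP w t := by
  constructor
  · intro hU t h1 h2 hqp
    rw [qp_iff w t h1 h2] at hqp
    have hsuf : w.drop t <:+ w := List.drop_suffix t w
    have hne : w.drop t ≠ [] := by
      intro hnil
      have := congrArg List.length hnil
      simp at this; omega
    have hlt : (w.drop t).length < w.length := by simp; omega
    obtain ⟨hA, hB⟩ := hU (w.drop t) hne hlt hsuf
    rcases hqp with hEq | hEq
    · exact hA (by rw [List.prefix_iff_eq_take]; simpa [Nat.min_eq_left (by omega : w.length - t ≤ w.length)] using hEq)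
    · refine hB ?_
      rw [List.prefix_iff_eq_take]
      simpa using hEq
  · intro hQ S hne hlt hsuf
    obtain ⟨hlenS, hSeq⟩ : S.length ≤ w.length ∧ S = w.drop (w.length - S.length) := by
      rw [List.suffix_iff_eq_drop] at hsuf
      exact ⟨by omega, hsuf⟩
    set t := w.length - S.length with ht
    have h1 : 1 ≤ t := by omega
    have h2 : t < w.length := by
      have : S.length ≠ 0 := by simpa [List.length_eq_zero_iff] using hne
      omega
    have hq' := hQ t h1 h2
    rw [qp_iff w t h1 h2] at hq'
    have hSlen : S.length = w.length - t := by omega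
    constructor
    · intro hpre
      refine hq' (Or.inl ?_)
      rw [← hSeq, ← hSlen]
      exact (List.prefix_iff_eq_take.mp hpre)
    · intro hpre
      refine hq' (Or.inr ?_)
      rw [← hSeq, ← hSlen]
      exact (List.prefix_iff_eq_take.mp hpre)

end UBaux

namespace UBaux
variable {q : ℕ}

lemma qp_double {w : List (ZMod q)} {t : ℕ} (h1 : 1 ≤ t) (h2 : 2 * t < w.length)
    (hqp : QP w t) : QP w (2 * t) := by
  obtain ⟨h0, hr⟩ := hqp
  have ht2 : g w (2 * t) = g w t := by
    have := hr t h1 (by omega)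
    simpa [two_mul] using this
  refine ⟨by rw [ht2]; exact h0, ?_⟩
  intro i hi hlt
  have e1 : g w (2 * t + i) = g w (t + i) := by
    have := hr (t + i) (by omega) (by omega)
    convert this using 2
    omega
  rw [e1]
  exact hr i hi (by omega)

/-- characterization using only large quasi-periods -/
lemma unb_iff_qp_half (w : List (ZMod q)) :
    OneUnbordered w ↔ ∀ t, w.length ≤ 2 * t → t < w.length → ¬ QP w t := by
  rw [unb_iff_qp]
  constructor
  · intro hQ t h1 h2
    exact hQ t (by omega) h2
  · intro hQ t h1 h2 hqp
    -- find large quasi-period by doubling, induction on w.length - t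
    have : ∀ k t, w.length - t ≤ k → 1 ≤ t → t < w.length → QP w t → False := by
      intro k
      induction k with
      | zero => intro t hk h1 h2 _; omega
      | succ n ih =>
        intro t hk h1 h2 hqp
        by_cases hbig : w.length ≤ 2 * t
        · exact hQ t hbig h2 hqp
        · exact ih (2 * t) (by omega) (by omega) (by omega) (qp_double h1 (by omega) hqp)
    exact this (w.length - t) t le_rfl h1 h2 hqp

/-- erase-middle correspondence for large quasi-periods -/
lemma qp_erase {w : List (ZMod q)} {m t : ℕ} (hm : 1 ≤ m) (hmt : m + 1 ≤ t)
    (ht : t < w.length) (hnt : w.length - t ≤ m) :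
    QP w t ↔ QP (w.eraseIdx m) (t - 1) := by
  have hmlt : m < w.length := by omega
  have hlen : (w.eraseIdx m).length = w.length - 1 := by
    rw [List.length_eraseIdx]; simp [hmlt]
  have gsmall : ∀ i, i < m → g (w.eraseIdx m) i = g w i := by
    intro i hi
    rw [g_eq (w.eraseIdx m) (show i < (w.eraseIdx m).length by omega),
      g_eq w (show i < w.length by omega), List.getElem_eraseIdx, dif_pos hi]
  have gbig : ∀ j, m ≤ j → j < w.length - 1 → g (w.eraseIdx m) j = g w (j + 1) := by
    intro j hj hj2
    rw [g_eq (w.eraseIdx m) (show j < (w.eraseIdx m).length by omega),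
      g_eq w (show j + 1 < w.length by omega), List.getElem_eraseIdx, dif_neg (by omega)]
  constructor
  · rintro ⟨h0, hr⟩
    constructor
    · rw [gsmall 0 (by omega), gbig (t-1) (by omega) (by omega),
        show t - 1 + 1 = t by omega]
      exact h0
    · intro i hi hlt
      rw [hlen] at hlt
      rw [gsmall i (by omega), gbig (t-1+i) (by omega) (by omega),
        show t - 1 + i + 1 = t + i by omega]
      exact hr i hi (by omega)
  · rintro ⟨h0, hr⟩
    rw [gsmall 0 (by omega), gbig (t-1) (by omega) (by omega),
      show t - 1 + 1 = t by omega] at h0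
    constructor
    · exact h0
    · intro i hi hlt
      have := hr i hi (by omega)
      rwa [gsmall i (by omega), gbig (t-1+i) (by omega) (by omega),
        show t - 1 + i + 1 = t + i by omega] at this

/-- odd length: unbordered iff erase middle unbordered -/
lemma unb_erase_odd {w : List (ZMod q)} {m : ℕ} (hm : 1 ≤ m) (hlen : w.length = 2 * m + 1) :
    OneUnbordered w ↔ OneUnbordered (w.eraseIdx m) := by
  have hlen' : (w.eraseIdx m).length = 2 * m := by
    rw [List.length_eraseIdx]; simp [hlen]; omega
  rw [unb_iff_qp_half, unb_iff_qp_half, hlen, hlen']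
  constructor
  · intro hQ t' h1 h2 hqp
    have := (qp_erase (w:=w) hm (show m + 1 ≤ t' + 1 by omega) (by omega) (by omega)).mpr
      (by simpa using hqp)
    exact hQ (t' + 1) (by omega) (by omega) this
  · intro hQ t h1 h2 hqp
    have := (qp_erase hm (show m + 1 ≤ t by omega) (by omega) (by omega)).mp hqp
    exact hQ (t - 1) (by omega) (by omega) this

/-- even length: unbordered iff erase middle unbordered and no quasi-period m -/
lemma unb_erase_even {w : List (ZMod q)} {m : ℕ} (hm : 1 ≤ m) (hlen : w.length = 2 * m) :
    OneUnbordered w ↔ (OneUnbordered (w.eraseIdx m) ∧ ¬ QP w m) := by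
  have hm2 : 2 ≤ 2 * m := by omega
  have hlen' : (w.eraseIdx m).length = 2 * m - 1 := by
    rw [List.length_eraseIdx]; simp [hlen]; omega
  rw [unb_iff_qp_half, unb_iff_qp_half, hlen, hlen']
  constructor
  · intro hQ
    constructor
    · intro t' h1 h2 hqp
      have := (qp_erase (w:=w) hm (show m + 1 ≤ t' + 1 by omega) (by omega) (by omega)).mpr
        (by simpa using hqp)
      exact hQ (t' + 1) (by omega) (by omega) this
    · exact hQ m (by omega) (by omega)
  · rintro ⟨hQ, hQm⟩ t h1 h2 hqp
    rcases Nat.eq_or_lt_of_le (show m ≤ t by omega) with rfl | hmt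
    · exact hQm hqp
    · have := (qp_erase hm (by omega) (by omega) (by omega)).mp hqp
      exact hQ (t - 1) (by omega) (by omega) this

end UBaux


namespace UBaux
variable {q : ℕ}

lemma g_append_left (u v : List (ZMod q)) {i : ℕ} (h : i < u.length) :
    g (u ++ v) i = g u i := by
  rw [g_eq (u ++ v) (show i < (u ++ v).length by simp; omega), g_eq u h,
    List.getElem_append_left h]

lemma g_append_right (u v : List (ZMod q)) {j : ℕ} (h : u.length ≤ j)
    (h2 : j < u.length + v.length) :
    g (u ++ v) j = g v (j - u.length) := by
  rw [g_eq (u ++ v) (show j < (u ++ v).length by simp; omega),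
    g_eq v (show j - u.length < v.length by omega), List.getElem_append_right h]

lemma g_tail (u : List (ZMod q)) {j : ℕ} (h : j + 1 < u.length) :
    g u.tail j = g u (j + 1) := by
  rw [← List.drop_one, g_drop u (show 1 + j < u.length by omega)]
  congr 1; omega

lemma take_addOneFirst (w : List (ZMod q)) {k : ℕ} (h : 1 ≤ k) :
    (addOneFirst w).take k = addOneFirst (w.take k) := by
  cases w with
  | nil => simp [addOneFirst]
  | cons x xs =>
    obtain ⟨k', rfl⟩ : ∃ k', k = k' + 1 := ⟨k - 1, by omega⟩
    simp [addOneFirst]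

lemma tail_addOneFirst (w : List (ZMod q)) : (addOneFirst w).tail = w.tail := by
  cases w <;> simp [addOneFirst]

lemma qp_shift {u : List (ZMod q)} {s : ℕ} (h1 : 1 ≤ s) (h2 : s < u.length) :
    QP u s ↔ QP (u ++ u.tail) (u.length - 1 + s) := by
  set m := u.length with hm
  have hm1 : 1 ≤ m := by omega
  have hlenV : (u ++ u.tail).length = 2 * m - 1 := by simp [hm]; omega
  set t := m - 1 + s with htdef
  have gV0 : g (u ++ u.tail) 0 = g u 0 := g_append_left u u.tail (by omega)
  have gVt : g (u ++ u.tail) t = g u s := by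
    rcases Nat.lt_or_ge t m with hlt | hge
    · rw [g_append_left u u.tail (by omega)]
      congr 1; omega
    · rw [g_append_right u u.tail (by omega) (by simp; omega), g_tail u (by omega)]
      congr 1; omega
  constructor
  · rintro ⟨h0, hr⟩
    refine ⟨by rw [gVt, gV0]; exact h0, ?_⟩
    intro i hi hlt
    rw [hlenV] at hlt
    have e1 : g (u ++ u.tail) (t + i) = g u (s + i) := by
      rw [g_append_right u u.tail (by omega) (by simp; omega), g_tail u (by omega)]
      congr 1; omega
    rw [e1, g_append_left u u.tail (by omega)]
    exact hr i hi (by omega)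
  · rintro ⟨h0, hr⟩
    rw [gVt, gV0] at h0
    refine ⟨h0, ?_⟩
    intro i hi hlt
    have h3 := hr i hi (by rw [hlenV]; omega)
    have e1 : g (u ++ u.tail) (t + i) = g u (s + i) := by
      rw [g_append_right u u.tail (by omega) (by simp; omega), g_tail u (by omega)]
      congr 1; omega
    have e2 : g (u ++ u.tail) i = g u i := g_append_left u u.tail (by omega)
    rw [e1, e2] at h3
    exact h3

lemma unb_double_word (u : List (ZMod q)) (hm1 : 1 ≤ u.length) :
    OneUnbordered (u ++ u.tail) ↔ OneUnbordered u := by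
  set m := u.length with hm
  have hlenV : (u ++ u.tail).length = 2 * m - 1 := by simp [hm]; omega
  rw [unb_iff_qp_half, unb_iff_qp, hlenV]
  constructor
  · intro hQ s h1 h2 hqp
    have ht := (qp_shift h1 h2).mp hqp
    exact hQ (m - 1 + s) (by omega) (by omega) ht
  · intro hQ t h1 h2 hqp
    have hs1 : 1 ≤ t - (m - 1) := by omega
    have hs2 : t - (m - 1) < m := by omega
    have := (qp_shift hs1 hs2).mpr (by rwa [show m - 1 + (t - (m-1)) = t by omega])
    exact hQ (t - (m - 1)) hs1 hs2 this

lemma qp_m_iff {w : List (ZMod q)} {m : ℕ} (hm : 1 ≤ m) (hlen : w.length = 2 * m) :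
    QP w m ↔ (w.drop m = w.take m ∨ w.drop m = addOneFirst (w.take m)) := by
  have h2 : m < w.length := by omega
  have hsub : w.length - m = m := by omega
  rw [qp_iff w m (by omega) h2, hsub, take_addOneFirst w hm]

/-- structure of words with quasi-period m: erase middle = take m ++ (take m).tail -/
lemma erase_of_qp_m {w : List (ZMod q)} {m : ℕ} (hm : 1 ≤ m) (hlen : w.length = 2 * m)
    (hqp : QP w m) : w.eraseIdx m = w.take m ++ (w.take m).tail := by
  rw [List.eraseIdx_eq_take_drop_succ]
  congr 1
  rw [show m + 1 = m + 1 by rfl, ← List.drop_drop, List.drop_one]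
  rcases (qp_m_iff hm hlen).mp hqp with hEq | hEq
  · rw [hEq]
  · rw [hEq, tail_addOneFirst]

end UBaux


namespace UBaux
variable {q : ℕ}

lemma finite_sub' (hq : 0 < q) (n : ℕ) (P : List (ZMod q) → Prop)
    (hP : ∀ w, P w → w.length = n) :
    Finite {w : List (ZMod q) // P w} := by
  haveI : NeZero q := ⟨by omega⟩
  apply Finite.of_injective (fun w : {w : List (ZMod q) // P w} =>
    (fun i : Fin n => g w.1 i))
  rintro ⟨w1, hw1⟩ ⟨w2, hw2⟩ hEq
  have h1 := hP w1 hw1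
  have h2 := hP w2 hw2
  ext1
  dsimp only at hEq ⊢
  rw [list_eq_iff_g (by omega)]
  intro i hi
  exact congrFun hEq ⟨i, by omega⟩

lemma finite_sub (hq : 0 < q) (n : ℕ) (P : List (ZMod q) → Prop) :
    Finite {w : List (ZMod q) // w.length = n ∧ P w} :=
  finite_sub' hq n _ (fun w hw => hw.1)

lemma g_insert_self (v : List (ZMod q)) (c : ZMod q) {m : ℕ} (h : m ≤ v.length) :
    g (v.insertIdx m c) m = c := by
  rw [g_eq _ (show m < (v.insertIdx m c).length by rw [List.length_insertIdx_of_le_length h]; omega),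
    List.getElem_insertIdx_self (l := v) (x := c) (i := m) (by rw [List.length_insertIdx_of_le_length h]; omega)]

lemma insert_erase_self (w : List (ZMod q)) {m : ℕ} (h : m < w.length) :
    (w.eraseIdx m).insertIdx m (g w m) = w := by
  have hel : (w.eraseIdx m).length = w.length - 1 := by
    rw [List.length_eraseIdx, if_pos h]
  have hlen : ((w.eraseIdx m).insertIdx m (g w m)).length = w.length := by
    rw [List.length_insertIdx_of_le_length (by omega)]; omega
  rw [list_eq_iff_g hlen]
  intro i hi
  rw [hlen] at hi
  rcases Nat.lt_trichotomy i m with hlt | rfl | hgt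
  · rw [g_eq _ (by omega), g_eq w hi,
      List.getElem_insertIdx_of_lt hlt (by omega), List.getElem_eraseIdx, dif_pos hlt]
  · rw [g_insert_self _ _ (by omega), g_eq w hi]
  · obtain ⟨k, rfl⟩ : ∃ k, i = m + k + 1 := ⟨i - m - 1, by omega⟩
    rw [g_eq _ (by omega), g_eq w hi,
      List.getElem_insertIdx_add_succ _ _ _ _ (by omega), List.getElem_eraseIdx,
      dif_neg (by omega)]

/-- generic insertion equivalence -/
noncomputable def insEquiv (m n : ℕ) (hmn : m ≤ n) (P : List (ZMod q) → Prop) :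
    {w : List (ZMod q) // w.length = n + 1 ∧ P (w.eraseIdx m)} ≃
      {v : List (ZMod q) // v.length = n ∧ P v} × ZMod q where
  toFun w := (⟨w.1.eraseIdx m, by
      rw [List.length_eraseIdx, if_pos (by omega)]; omega, w.2.2⟩, g w.1 m)
  invFun vc := ⟨vc.1.1.insertIdx m vc.2, by
      rw [List.length_insertIdx_of_le_length (by rw [vc.1.2.1]; omega), vc.1.2.1], by
      rw [List.eraseIdx_insertIdx_self]; exact vc.1.2.2⟩
  left_inv w := by
    ext1
    exact insert_erase_self w.1 (by rw [w.2.1]; omega)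
  right_inv vc := by
    have h1 : vc.1.1.length = n := vc.1.2.1
    refine Prod.ext ?_ ?_
    · ext1
      exact List.eraseIdx_insertIdx_self vc.2
    · exact g_insert_self vc.1.1 vc.2 (by omega)

def splitEquiv {α : Type*} (p r : α → Prop) [DecidablePred r] :
    {a // p a} ≃ {a // p a ∧ r a} ⊕ {a // p a ∧ ¬ r a} where
  toFun a := if h : r a.1 then .inl ⟨a.1, a.2, h⟩ else .inr ⟨a.1, a.2, h⟩
  invFun x := x.elim (fun a => ⟨a.1, a.2.1⟩) (fun a => ⟨a.1, a.2.1⟩)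
  left_inv a := by dsimp only; split <;> rfl
  right_inv x := by
    rcases x with ⟨a, ha, hr⟩ | ⟨a, ha, hr⟩
    · simp only [Sum.elim_inl]
      simp [hr]
    · simp only [Sum.elim_inr]
      simp [hr]

lemma unb_small {w : List (ZMod q)} (h : w.length ≤ 1) : OneUnbordered w := by
  intro S hne hlt _
  exfalso
  have : S.length ≠ 0 := by simpa [List.length_eq_zero_iff] using hne
  omega

lemma card_zero : countOneUnbordered q 0 = 1 := by
  rw [countOneUnbordered, Nat.card_eq_one_iff_unique]
  constructor
  · constructor
    rintro ⟨w1, hw1, -⟩ ⟨w2, hw2, -⟩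
    rw [List.length_eq_zero_iff] at hw1 hw2
    exact Subtype.ext (hw1.trans hw2.symm)
  · exact ⟨⟨[], rfl, unb_small (by simp)⟩⟩

noncomputable def singletonEquiv : {w : List (ZMod q) // w.length = 1 ∧ OneUnbordered w} ≃ ZMod q where
  toFun w := g w.1 0
  invFun c := ⟨[c], rfl, unb_small (by simp)⟩
  left_inv w := by
    ext1
    rw [list_eq_iff_g (by rw [w.2.1]; rfl)]
    intro i hi
    have : i = 0 := by simp at hi; omega
    subst this
    rfl
  right_inv c := rfl

lemma card_one : countOneUnbordered q 1 = q := by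
  rw [countOneUnbordered, Nat.card_congr singletonEquiv, Nat.card_zmod]

lemma card_odd (m : ℕ) (hm : 1 ≤ m) :
    countOneUnbordered q (2 * m + 1) = q * countOneUnbordered q (2 * m) := by
  rw [countOneUnbordered, countOneUnbordered]
  have e1 : {w : List (ZMod q) // w.length = 2 * m + 1 ∧ OneUnbordered w} ≃
      {w : List (ZMod q) // w.length = 2 * m + 1 ∧ OneUnbordered (w.eraseIdx m)} :=
    Equiv.subtypeEquivRight (fun w => by
      constructor
      · rintro ⟨hl, hu⟩; exact ⟨hl, (unb_erase_odd hm hl).mp hu⟩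
      · rintro ⟨hl, hu⟩; exact ⟨hl, (unb_erase_odd hm hl).mpr hu⟩)
  rw [Nat.card_congr (e1.trans (insEquiv m (2 * m) (by omega) OneUnbordered)),
    Nat.card_prod, Nat.card_zmod, mul_comm]

noncomputable def doubleEquiv (hq : 2 ≤ q) (m : ℕ) (hm : 1 ≤ m) :
    {w : List (ZMod q) // (w.length = (2 * m - 1) + 1 ∧ OneUnbordered (w.eraseIdx m)) ∧ ¬ ¬ QP w m} ≃
      {u : List (ZMod q) // u.length = m ∧ OneUnbordered u} × Bool where
  toFun w := (⟨w.1.take m, by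
      rw [List.length_take, w.2.1.1]; omega, by
      have hqp := not_not.mp w.2.2
      have hlen : w.1.length = 2 * m := by rw [w.2.1.1]; omega
      have he := erase_of_qp_m hm hlen hqp
      have hu := w.2.1.2
      rw [he] at hu
      exact (unb_double_word _ (by rw [List.length_take, hlen]; omega)).mp hu⟩,
    if g w.1 m = g w.1 0 then false else true)
  invFun ub := ⟨ub.1.1 ++ (if ub.2 then addOneFirst ub.1.1 else ub.1.1), by
      have hlu : ub.1.1.length = m := ub.1.2.1
      have hlv : (if ub.2 then addOneFirst ub.1.1 else ub.1.1).length = m := by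
        cases hb : ub.2
        · rw [if_neg (by simp)]; exact hlu
        · rw [if_pos rfl, length_addOneFirst]; exact hlu
      have hlen : (ub.1.1 ++ (if ub.2 then addOneFirst ub.1.1 else ub.1.1)).length = 2 * m := by
        rw [List.length_append, hlu, hlv]; omega
      have htake : (ub.1.1 ++ (if ub.2 then addOneFirst ub.1.1 else ub.1.1)).take m = ub.1.1 :=
        List.take_left' hlu
      have hdrop : (ub.1.1 ++ (if ub.2 then addOneFirst ub.1.1 else ub.1.1)).drop m
          = (if ub.2 then addOneFirst ub.1.1 else ub.1.1) := List.drop_left' hlu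
      have hqp : QP (ub.1.1 ++ (if ub.2 then addOneFirst ub.1.1 else ub.1.1)) m := by
        rw [qp_m_iff hm hlen, hdrop, htake]
        cases hb : ub.2
        · left; simp
        · right; simp
      refine ⟨⟨by omega, ?_⟩, not_not.mpr hqp⟩
      have he := erase_of_qp_m hm hlen hqp
      rw [he, htake]
      exact (unb_double_word _ (by rw [ub.1.2.1]; omega)).mpr ub.1.2.2⟩
  left_inv w := by
    haveI : Fact (1 < q) := ⟨by omega⟩
    have hqp := not_not.mp w.2.2
    have hlen : w.1.length = 2 * m := by rw [w.2.1.1]; omega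
    have hg0 : g (w.1.take m) 0 = g w.1 0 := g_take w.1 (by omega) (by omega)
    have hgm : g w.1 m = g (w.1.drop m) 0 := by
      have h := g_drop w.1 (show m + 0 < w.1.length by omega)
      simpa using h.symm
    ext1
    dsimp only
    rcases (qp_m_iff hm hlen).mp hqp with hdrop | hdrop
    · have hcond : g w.1 m = g w.1 0 := by
        rw [hgm, hdrop, hg0]
      simp only [if_pos hcond]
      simp only [if_neg Bool.false_ne_true, Bool.false_eq_true, if_false]
      conv_rhs => rw [← List.take_append_drop m w.1]
      rw [hdrop]
    · have hne : w.1.take m ≠ [] := by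
        have hlt : 0 < (w.1.take m).length := by rw [List.length_take]; omega
        exact List.length_pos_iff.mp hlt
      have hcond : g w.1 m ≠ g w.1 0 := by
        rw [hgm, hdrop, g_addOneFirst_zero hne, hg0]
        intro hcon
        exact one_ne_zero (add_left_cancel (a := g w.1 0) (by rw [hcon, add_zero]))
      simp only [if_neg hcond]
      simp only [if_pos]
      conv_rhs => rw [← List.take_append_drop m w.1]
      rw [hdrop]
  right_inv ub := by
    haveI : Fact (1 < q) := ⟨by omega⟩
    obtain ⟨⟨u, hu⟩, b⟩ := ub
    have hlu : u.length = m := hu.1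
    have hne : u ≠ [] := by
      intro hnil
      rw [hnil] at hlu
      simp at hlu
      omega
    dsimp only
    cases b
    · simp only [Bool.false_eq_true, if_false]
      have htake : (u ++ u).take m = u := List.take_left' hlu
      have hgm : g (u ++ u) m = g u 0 := by
        rw [g_append_right u u (by omega) (by omega), hlu, Nat.sub_self]
      have hg0 : g (u ++ u) 0 = g u 0 := g_append_left u u (by omega)
      refine Prod.ext (Subtype.ext htake) ?_
      dsimp only
      rw [if_pos (by rw [hgm, hg0])]
    · simp only [if_true]
      have htake : (u ++ addOneFirst u).take m = u := List.take_left' hlu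
      have hgm : g (u ++ addOneFirst u) m = g u 0 + 1 := by
        rw [g_append_right u (addOneFirst u) (by omega)
          (by rw [length_addOneFirst]; omega), hlu, Nat.sub_self,
          g_addOneFirst_zero hne]
      have hg0 : g (u ++ addOneFirst u) 0 = g u 0 := g_append_left u (addOneFirst u) (by omega)
      refine Prod.ext (Subtype.ext htake) ?_
      dsimp only
      rw [if_neg ?_]
      rw [hgm, hg0]
      intro hcon
      exact one_ne_zero (add_left_cancel (a := g u 0) (by rw [hcon, add_zero]))

lemma card_even (hq : 2 ≤ q) (m : ℕ) (hm : 1 ≤ m) :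
    q * countOneUnbordered q (2 * m - 1) =
      countOneUnbordered q (2 * m) + 2 * countOneUnbordered q m := by
  classical
  haveI : Fact (1 < q) := ⟨by omega⟩
  have hfin : ∀ (n : ℕ) (P : List (ZMod q) → Prop),
      Finite {w : List (ZMod q) // w.length = n ∧ P w} := fun n P => finite_sub (by omega) n P
  -- A := words of length 2m whose middle-erasure is unbordered
  have eIns : {w : List (ZMod q) // w.length = (2 * m - 1) + 1 ∧ OneUnbordered (w.eraseIdx m)} ≃
      {v : List (ZMod q) // v.length = 2 * m - 1 ∧ OneUnbordered v} × ZMod q :=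
    insEquiv m (2 * m - 1) (by omega) OneUnbordered
  have hA : Nat.card {w : List (ZMod q) // w.length = (2 * m - 1) + 1 ∧ OneUnbordered (w.eraseIdx m)}
      = q * countOneUnbordered q (2 * m - 1) := by
    rw [Nat.card_congr eIns, Nat.card_prod, Nat.card_zmod, mul_comm, countOneUnbordered]
  -- split A
  have eSplit := splitEquiv (α := List (ZMod q))
    (fun w => w.length = (2 * m - 1) + 1 ∧ OneUnbordered (w.eraseIdx m)) (fun w => ¬ QP w m)
  have hsum : Nat.card {w : List (ZMod q) // w.length = (2 * m - 1) + 1 ∧ OneUnbordered (w.eraseIdx m)}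
      = Nat.card {w : List (ZMod q) // (w.length = (2 * m - 1) + 1 ∧ OneUnbordered (w.eraseIdx m)) ∧ ¬ QP w m}
      + Nat.card {w : List (ZMod q) // (w.length = (2 * m - 1) + 1 ∧ OneUnbordered (w.eraseIdx m)) ∧ ¬ ¬ QP w m} := by
    rw [Nat.card_congr eSplit]
    haveI : Finite {w : List (ZMod q) // (w.length = (2 * m - 1) + 1 ∧ OneUnbordered (w.eraseIdx m)) ∧ ¬ QP w m} :=
      finite_sub' (by omega) ((2*m-1)+1) _ (fun w hw => hw.1.1)
    haveI : Finite {w : List (ZMod q) // (w.length = (2 * m - 1) + 1 ∧ OneUnbordered (w.eraseIdx m)) ∧ ¬ ¬ QP w m} :=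
      finite_sub' (by omega) ((2*m-1)+1) _ (fun w hw => hw.1.1)
    exact Nat.card_sum
  have hlen2m : (2 * m - 1) + 1 = 2 * m := by omega
  -- first piece = unbordered words of length 2m
  have hfirst : Nat.card {w : List (ZMod q) // (w.length = (2 * m - 1) + 1 ∧ OneUnbordered (w.eraseIdx m)) ∧ ¬ QP w m}
      = countOneUnbordered q (2 * m) := by
    rw [countOneUnbordered]
    apply Nat.card_congr
    refine Equiv.subtypeEquivRight (fun w => ?_)
    constructor
    · rintro ⟨⟨hl, hu⟩, hnqp⟩
      exact ⟨by omega, (unb_erase_even hm (by omega)).mpr ⟨hu, hnqp⟩⟩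
    · rintro ⟨hl, hu⟩
      obtain ⟨h1, h2⟩ := (unb_erase_even hm (by omega)).mp hu
      exact ⟨⟨by omega, h1⟩, h2⟩
  have hsecond : Nat.card {w : List (ZMod q) // (w.length = (2 * m - 1) + 1 ∧ OneUnbordered (w.eraseIdx m)) ∧ ¬ ¬ QP w m}
      = 2 * countOneUnbordered q m := by
    rw [Nat.card_congr (doubleEquiv hq m hm), Nat.card_prod, countOneUnbordered]
    have : Nat.card Bool = 2 := by simp [Nat.card_eq_fintype_card]
    rw [this, mul_comm]
  omega

end UBaux


namespace UBaux

noncomputable def e (q n : ℕ) : ℤ := (-(q : ℤ)) ^ (Nat.digits 2 n).sum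

lemma e_zero (q : ℕ) : e q 0 = 1 := by simp [e]

lemma digitsum_two_mul (m : ℕ) : (Nat.digits 2 (2 * m)).sum = (Nat.digits 2 m).sum := by
  rcases Nat.eq_zero_or_pos m with rfl | hm
  · simp
  · rw [Nat.digits_def' (by norm_num) (by omega)]
    simp [Nat.mul_div_cancel_left m (by norm_num : 0 < 2), Nat.mul_mod_right]

lemma digitsum_two_mul_add_one (m : ℕ) :
    (Nat.digits 2 (2 * m + 1)).sum = (Nat.digits 2 m).sum + 1 := by
  rw [Nat.digits_def' (by norm_num) (by omega)]
  have h1 : (2 * m + 1) % 2 = 1 := by omega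
  have h2 : (2 * m + 1) / 2 = m := by omega
  rw [h1, h2]
  simp [Nat.add_comm]

lemma digitsum_add_pow (j : ℕ) : ∀ m, m < 2 ^ j →
    (Nat.digits 2 (m + 2 ^ j)).sum = (Nat.digits 2 m).sum + 1 := by
  induction j with
  | zero =>
    intro m hm
    interval_cases m
    simp
  | succ j ih =>
    intro m hm
    rcases Nat.even_or_odd m with ⟨k, hk⟩ | ⟨k, hk⟩
    · have hk2 : k < 2 ^ j := by rw [pow_succ] at hm; omega
      have : m + 2 ^ (j + 1) = 2 * (k + 2 ^ j) := by rw [pow_succ]; omega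
      rw [this, digitsum_two_mul, ih k hk2, hk, show k + k = 2 * k by omega,
        digitsum_two_mul]
    · have hk2 : k < 2 ^ j := by rw [pow_succ] at hm; omega
      have : m + 2 ^ (j + 1) = 2 * (k + 2 ^ j) + 1 := by rw [pow_succ]; omega
      rw [this, digitsum_two_mul_add_one, ih k hk2, hk, digitsum_two_mul_add_one]

lemma e_two_mul (q m : ℕ) : e q (2 * m) = e q m := by rw [e, e, digitsum_two_mul]

lemma e_two_mul_add_one (q m : ℕ) : e q (2 * m + 1) = -(q : ℤ) * e q m := by
  rw [e, e, digitsum_two_mul_add_one, pow_succ, mul_comm]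

lemma e_add_pow (q j m : ℕ) (hm : m < 2 ^ j) : e q (m + 2 ^ j) = -(q : ℤ) * e q m := by
  rw [e, e, digitsum_add_pow j m hm, pow_succ, mul_comm]

/-- coefficients of the partial product -/
lemma coeff_P (q : ℕ) (K : ℕ) : ∀ i : ℕ,
    PowerSeries.coeff (R := ℤ) i (∏ j ∈ Finset.range (K + 1),
      (1 - (q : PowerSeries ℤ) * PowerSeries.X ^ (2 ^ j))) =
    if i < 2 ^ (K + 1) then e q i else 0 := by
  have hc : ∀ (φ : PowerSeries ℤ) (N i : ℕ),
      PowerSeries.coeff (R := ℤ) i (φ * (1 - (q : PowerSeries ℤ) * PowerSeries.X ^ N)) =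
        PowerSeries.coeff (R := ℤ) i φ -
          (q : ℤ) * (if N ≤ i then PowerSeries.coeff (R := ℤ) (i - N) φ else 0) := by
    intro φ N i
    have expand : φ * (1 - (q : PowerSeries ℤ) * PowerSeries.X ^ N)
        = φ - PowerSeries.C (R := ℤ) (q : ℤ) * (φ * PowerSeries.X ^ N) := by
      rw [← map_natCast (PowerSeries.C (R := ℤ)) q]
      ring
    rw [expand, map_sub, PowerSeries.coeff_C_mul, PowerSeries.coeff_mul_X_pow']
  induction K with
  | zero =>
    intro i
    have e_one : e q 1 = -(q : ℤ) := by
      have h1 : (Nat.digits 2 1).sum = 1 := by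
        have := digitsum_two_mul_add_one 0
        simpa using this
      rw [e, h1, pow_one]
    rw [Finset.prod_range_one,
      ← one_mul (1 - (q : PowerSeries ℤ) * PowerSeries.X ^ (2 ^ 0)), hc, pow_zero]
    match i with
    | 0 => simp [PowerSeries.coeff_one, e_zero]
    | 1 => simp [PowerSeries.coeff_one, e_one]
    | (k+2) =>
      rw [if_neg (show ¬ (k + 2 < 2 ^ (0 + 1)) by norm_num; omega)]
      simp [PowerSeries.coeff_one]
  | succ K ih =>
    intro i
    have hpow : (2 : ℕ) ^ (K + 2) = 2 ^ (K + 1) + 2 ^ (K + 1) := by rw [pow_succ]; ring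
    rw [Finset.prod_range_succ, hc, ih i]
    rcases Nat.lt_or_ge i (2 ^ (K + 1)) with h1 | h1
    · rw [if_pos h1, if_neg (by omega), if_pos (by omega), mul_zero, sub_zero]
    · rw [if_neg (by omega), if_pos (by omega), ih (i - 2 ^ (K + 1))]
      rcases Nat.lt_or_ge i (2 ^ (K + 2)) with h2 | h2
      · have h3 : i - 2 ^ (K + 1) + 2 ^ (K + 1) = i := by omega
        have he : e q i = -(q : ℤ) * e q (i - 2 ^ (K + 1)) := by
          conv_lhs => rw [← h3]
          exact e_add_pow q (K + 1) _ (by omega)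
        rw [if_pos (by omega), if_pos (by omega), he]
        ring
      · rw [if_neg (by omega), if_neg (by omega)]
        ring

end UBaux


namespace UBaux

lemma e_def (q n : ℕ) : e q n = (-(q : ℤ)) ^ (Nat.digits 2 n).sum := rfl

lemma sum_pairs (f : ℕ → ℤ) (r : ℕ) :
    ∑ i ∈ Finset.range (2 * r), f i = ∑ j ∈ Finset.range r, (f (2 * j) + f (2 * j + 1)) := by
  induction r with
  | zero => simp
  | succ r ih =>
    have h2 : 2 * (r + 1) = (2 * r + 1) + 1 := by ring
    rw [h2, Finset.sum_range_succ, Finset.sum_range_succ, Finset.sum_range_succ, ih]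
    ring

variable {q : ℕ}

lemma b_odd (hq : 2 ≤ q) (s : ℕ) :
    (countOneUnbordered q (2 * s + 1) : ℤ) = q * countOneUnbordered q (2 * s) := by
  rcases Nat.eq_zero_or_pos s with rfl | hs
  · simp only [Nat.mul_zero, Nat.zero_add, card_one, card_zero]
    push_cast; ring
  · rw [card_odd s hs]; push_cast; ring

lemma b_even (hq : 2 ≤ q) {s : ℕ} (hs : 1 ≤ s) :
    (countOneUnbordered q (2 * s) : ℤ) =
      q * countOneUnbordered q (2 * s - 1) - 2 * countOneUnbordered q s := by
  have h := card_even hq s hs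
  have h2 := congrArg (fun x : ℕ => (x : ℤ)) h
  push_cast at h2
  linarith

lemma conv_eq (hq : 2 ≤ q) (h : ℕ → ℤ) (h0 : h 0 = 1)
    (hn : ∀ n : ℕ, 1 ≤ n →
      h n = (-(q : ℤ)) ^ (Nat.digits 2 n).sum * (1 - (-2 : ℤ) ^ (padicValNat 2 n))) :
    ∀ n, (∑ i ∈ Finset.range (n + 1), e q i * (countOneUnbordered q (n - i) : ℤ)) = h n := by
  intro n
  induction n using Nat.strong_induction_on with
  | _ n ih =>
    rcases Nat.eq_zero_or_pos n with rfl | hn1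
    · simp [e_zero, card_zero, h0]
    rcases Nat.even_or_odd n with ⟨r, hr⟩ | ⟨r, hr⟩
    -- even case, n = 2r with r ≥ 1
    · have hr1 : 1 ≤ r := by omega
      have hn2 : n = 2 * r := by omega
      have hsplit : ∑ i ∈ Finset.range (n + 1), e q i * (countOneUnbordered q (n - i) : ℤ)
          = (∑ j ∈ Finset.range r,
              (e q (2 * j) * (countOneUnbordered q (n - 2 * j) : ℤ)
              + e q (2 * j + 1) * (countOneUnbordered q (n - (2 * j + 1)) : ℤ)))
            + e q (2 * r) * (countOneUnbordered q (n - 2 * r) : ℤ) := by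
        rw [show n + 1 = 2 * r + 1 by omega, Finset.sum_range_succ,
          sum_pairs (fun i => e q i * (countOneUnbordered q (n - i) : ℤ)) r, hn2]
      rw [hsplit]
      have hterm : ∀ j ∈ Finset.range r,
          e q (2 * j) * (countOneUnbordered q (n - 2 * j) : ℤ)
            + e q (2 * j + 1) * (countOneUnbordered q (n - (2 * j + 1)) : ℤ)
          = -2 * (e q j * (countOneUnbordered q (r - j) : ℤ)) := by
        intro j hj
        rw [Finset.mem_range] at hj
        have e1 : n - 2 * j = 2 * (r - j) := by omega
        have e2 : n - (2 * j + 1) = 2 * (r - j) - 1 := by omega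
        rw [e1, e2, e_two_mul, e_two_mul_add_one, b_even hq (show 1 ≤ r - j by omega)]
        ring
      rw [Finset.sum_congr rfl hterm, show n - 2 * r = 0 by omega, card_zero, e_two_mul]
      have hsum2 : ∑ j ∈ Finset.range r, -2 * (e q j * (countOneUnbordered q (r - j) : ℤ))
          = -2 * ((∑ i ∈ Finset.range (r + 1), e q i * (countOneUnbordered q (r - i) : ℤ))
              - e q r) := by
        rw [Finset.sum_range_succ, show r - r = 0 by omega, card_zero, ← Finset.mul_sum]
        push_cast
        ring
      rw [hsum2, ih r (by omega)]
      -- now show -2 * (h r - e q r) + e q r * 1 = h n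
      have hv : padicValNat 2 n = 1 + padicValNat 2 r := by
        rw [hn2, padicValNat.mul (by norm_num) (by omega), padicValNat.self (by norm_num)]
      have hdig : (Nat.digits 2 n).sum = (Nat.digits 2 r).sum := by
        rw [hn2, digitsum_two_mul]
      rw [hn n (by omega), hn r (by omega), hv, hdig, ← e_def, pow_add, pow_one]
      ring
    -- odd case, n = 2r+1
    · have hn2 : n = 2 * r + 1 := by omega
      have hsplit : ∑ i ∈ Finset.range (n + 1), e q i * (countOneUnbordered q (n - i) : ℤ)
          = ∑ j ∈ Finset.range (r + 1),
              (e q (2 * j) * (countOneUnbordered q (n - 2 * j) : ℤ)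
              + e q (2 * j + 1) * (countOneUnbordered q (n - (2 * j + 1)) : ℤ)) := by
        rw [show n + 1 = 2 * (r + 1) by omega,
          sum_pairs (fun i => e q i * (countOneUnbordered q (n - i) : ℤ)) (r + 1)]
      have hterm : ∀ j ∈ Finset.range (r + 1),
          e q (2 * j) * (countOneUnbordered q (n - 2 * j) : ℤ)
            + e q (2 * j + 1) * (countOneUnbordered q (n - (2 * j + 1)) : ℤ) = 0 := by
        intro j hj
        rw [Finset.mem_range] at hj
        have e1 : n - 2 * j = 2 * (r - j) + 1 := by omega
        have e2 : n - (2 * j + 1) = 2 * (r - j) := by omega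
        rw [e1, e2, e_two_mul, e_two_mul_add_one, b_odd hq]
        ring
      rw [hsplit, Finset.sum_congr rfl hterm, Finset.sum_const, smul_zero]
      have hv : padicValNat 2 n = 0 := by
        apply padicValNat.eq_zero_of_not_dvd
        omega
      rw [hn n (by omega), hv, pow_zero, sub_self, mul_zero]

end UBaux


/-- For `q ≥ 2`, with `β = ∑ b_m X^m ∈ ℤ[[X]]` the generating function of the numbers
`b_m` of 1-unbordered words of length `m` over `ℤ/qℤ`, and with `h 0 = 1` and
`h n = (−q)^(s n)·(1 − (−2)^(k n))` for `n ≥ 1` (`s n` the binary digit sum, `k n` the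
2-adic valuation), the coefficient of `X^n` in `β(X) · ∏_{j=0}^{K} (1 − q·X^(2^j))`
equals `h n` for every `K ≥ 0` and every `n < 2^(K+1)`. -/
theorem oneUnbordered_gf_closed_form (q : ℕ) (hq : 2 ≤ q)
    (β : PowerSeries ℤ)
    (hβ : β = PowerSeries.mk fun m => (countOneUnbordered q m : ℤ))
    (h : ℕ → ℤ)
    (h0 : h 0 = 1)
    (hn : ∀ n : ℕ, 1 ≤ n →
      h n = (-(q : ℤ)) ^ (Nat.digits 2 n).sum * (1 - (-2 : ℤ) ^ (padicValNat 2 n)))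
    (K : ℕ) (n : ℕ) (hnK : n < 2 ^ (K + 1)) :
    PowerSeries.coeff (R := ℤ) n
      (β * ∏ j ∈ Finset.range (K + 1),
        (1 - (q : PowerSeries ℤ) * PowerSeries.X ^ (2 ^ j))) = h n := by
  rw [hβ, PowerSeries.coeff_mul]
  have hcong : ∀ p ∈ Finset.HasAntidiagonal.antidiagonal n,
      (PowerSeries.coeff (R := ℤ) p.1) (PowerSeries.mk fun m => (countOneUnbordered q m : ℤ)) *
        (PowerSeries.coeff (R := ℤ) p.2) (∏ j ∈ Finset.range (K + 1),
          (1 - (q : PowerSeries ℤ) * PowerSeries.X ^ (2 ^ j)))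
      = (countOneUnbordered q p.1 : ℤ) * UBaux.e q p.2 := by
    intro p hp
    rw [Finset.HasAntidiagonal.mem_antidiagonal] at hp
    rw [PowerSeries.coeff_mk, UBaux.coeff_P q K p.2, if_pos (by omega)]
  rw [Finset.sum_congr rfl hcong,
    Finset.Nat.sum_antidiagonal_eq_sum_range_succ_mk
      (fun p => (countOneUnbordered q p.1 : ℤ) * UBaux.e q p.2) n]
  have hreflect := Finset.sum_range_reflect
    (fun i => (countOneUnbordered q i : ℤ) * UBaux.e q (n - i)) (n + 1)
  rw [← hreflect]
  have hcong2 : ∀ i ∈ Finset.range (n + 1),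
      (countOneUnbordered q (n + 1 - 1 - i) : ℤ) * UBaux.e q (n - (n + 1 - 1 - i))
      = UBaux.e q i * (countOneUnbordered q (n - i) : ℤ) := by
    intro i hi
    rw [Finset.mem_range] at hi
    rw [show n + 1 - 1 - i = n - i by omega, show n - (n - i) = i by omega]
    ring
  rw [Finset.sum_congr rfl hcong2]
  exact UBaux.conv_eq hq h h0 hn n
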